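/- Let μ be a closure operator on 2^U (U finite) and α, β nonredundant covers of μ. If (X, C) ∈ α, (Y, C) ∈ β, X ≠ Y, and X →̇ Y, then γ = (α \ {(X,C)}) ∪ {(Y,C)} is also a cover of μ: γ⁺ = μ. Moreover |γ| = |α|, so γ is a nonredundant cover (exchange property). -/

import Mathlib

open Set

variable {U : Type*}

/-- A closure operator on the power set of `U`: inclusion, monotonicity, idempotence. -/
def IsClosure (μ : Set U → Set U) : Prop :=
  (∀ X, X ⊆ μ X) ∧ (∀ X Y : Set U, X ⊆ Y → μ X ⊆ μ Y) ∧ (∀ X, μ (μ X) = μ X)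

/-- `K` is a key of `μ`: no proper subset of `K` has the same closure. -/
def IsKey (μ : Set U → Set U) (K : Set U) : Prop :=
  ∀ S : Set U, S ⊂ K → μ S ≠ μ K

/-- One step of the Extension-by-Closure recurrence for a set of pairs `α`. -/
def ecStep (α : Set (Set U × Set U)) (X : Set U) : Set U :=
  X ∪ ⋃ p ∈ {q ∈ α | q.1 ⊆ X}, p.2

/-- The iterates `Xα_t` of the Extension-by-Closure recurrence. -/
def ecIter (α : Set (Set U × Set U)) (X : Set U) : ℕ → Set U
  | 0 => X
  | n + 1 => ecStep α (ecIter α X n)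

/-- `Xα⁺`: the eventual stable value of the increasing recurrence
(for finite `U` the union over all iterates is the stable limit). -/
def extC (α : Set (Set U × Set U)) : Set U → Set U :=
  fun X => ⋃ n, ecIter α X n

/-- The closure `μ` viewed as a set of pairs `(X, Xμ)`. -/
def graphOf (μ : Set U → Set U) : Set (Set U × Set U) :=
  {p | p.2 = μ p.1}

/-- `α` is a cover of `μ`: a subset of `μ` (as pairs) with `α⁺ = μ`. -/
def IsCover (μ : Set U → Set U) (α : Set (Set U × Set U)) : Prop :=
  α ⊆ graphOf μ ∧ extC α = μ

/-- A nonredundant cover of `μ`: a cover no proper subset of which has closure `μ`. -/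
def NonredundantCover (μ : Set U → Set U) (α : Set (Set U × Set U)) : Prop :=
  IsCover μ α ∧ ∀ β : Set (Set U × Set U), β ⊂ α → extC β ≠ μ

lemma mem_ecStep {α : Set (Set U × Set U)} {T : Set U} {x : U} :
    x ∈ ecStep α T ↔ x ∈ T ∨ ∃ p ∈ α, p.1 ⊆ T ∧ x ∈ p.2 := by
  simp [ecStep]
  tauto

lemma subset_ecStep (α : Set (Set U × Set U)) (T : Set U) : T ⊆ ecStep α T :=
  subset_union_left

lemma ecStep_pair {α : Set (Set U × Set U)} {p : Set U × Set U} {T : Set U}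
    (hp : p ∈ α) (h1 : p.1 ⊆ T) : p.2 ⊆ ecStep α T :=
  fun _ hx => mem_ecStep.2 (Or.inr ⟨p, hp, h1, hx⟩)

lemma ecStep_mono {α β : Set (Set U × Set U)} {T T' : Set U}
    (hαβ : α ⊆ β) (hT : T ⊆ T') : ecStep α T ⊆ ecStep β T' := by
  intro x hx
  rcases mem_ecStep.1 hx with h | ⟨p, hp, h1, h2⟩
  · exact mem_ecStep.2 (Or.inl (hT h))
  · exact mem_ecStep.2 (Or.inr ⟨p, hαβ hp, h1.trans hT, h2⟩)

lemma ecIter_mono {α β : Set (Set U × Set U)} {S S' : Set U}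
    (hαβ : α ⊆ β) (hS : S ⊆ S') : ∀ n, ecIter α S n ⊆ ecIter β S' n := by
  intro n
  induction n with
  | zero => exact hS
  | succ n ih => exact ecStep_mono hαβ ih

lemma ecIter_monotone (α : Set (Set U × Set U)) (S : Set U) :
    Monotone (ecIter α S) :=
  monotone_nat_of_le_succ fun n => subset_ecStep α (ecIter α S n)

lemma ecIter_subset_extC (α : Set (Set U × Set U)) (S : Set U) (n : ℕ) :
    ecIter α S n ⊆ extC α S :=
  subset_iUnion (ecIter α S) n

lemma subset_extC (α : Set (Set U × Set U)) (S : Set U) : S ⊆ extC α S :=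
  ecIter_subset_extC α S 0

lemma extC_mono {α β : Set (Set U × Set U)} {S S' : Set U}
    (hαβ : α ⊆ β) (hS : S ⊆ S') : extC α S ⊆ extC β S' :=
  iUnion_subset fun n => (ecIter_mono hαβ hS n).trans (ecIter_subset_extC β S' n)

lemma extC_subset_of_closed {α : Set (Set U × Set U)} {S T : Set U}
    (hS : S ⊆ T) (hT : ∀ p ∈ α, p.1 ⊆ T → p.2 ⊆ T) : extC α S ⊆ T := by
  refine iUnion_subset fun n => ?_
  induction n with
  | zero => exact hS
  | succ n ih =>
    intro x hx
    rcases mem_ecStep.1 hx with h | ⟨p, hp, h1, h2⟩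
    · exact ih h
    · exact hT p hp (h1.trans ih) h2

lemma exists_iter_bound [Finite U] (α : Set (Set U × Set U)) (S : Set U) :
    ∃ N, extC α S ⊆ ecIter α S N := by
  have key : ∀ F : Set U, F.Finite → F ⊆ extC α S → ∃ N, F ⊆ ecIter α S N := by
    intro F hF
    refine Set.Finite.induction_on
      (motive := fun F _ => F ⊆ extC α S → ∃ N, F ⊆ ecIter α S N) F hF
      (fun _ => ⟨0, empty_subset _⟩) ?_
    intro a F' _ _ ih hsub
    obtain ⟨N1, hN1⟩ := ih ((subset_insert _ _).trans hsub)
    obtain ⟨n, hn⟩ := mem_iUnion.1 (hsub (mem_insert _ _))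
    exact ⟨max n N1, insert_subset (ecIter_monotone α S (le_max_left n N1) hn)
      (hN1.trans (ecIter_monotone α S (le_max_right n N1)))⟩
  exact key _ (Set.toFinite _) (subset_refl _)

lemma extC_step_closed [Finite U] {α : Set (Set U × Set U)} {p : Set U × Set U} {S : Set U}
    (hp : p ∈ α) (h1 : p.1 ⊆ extC α S) : p.2 ⊆ extC α S := by
  obtain ⟨N, hN⟩ := exists_iter_bound α S
  have h2 : p.2 ⊆ ecIter α S (N + 1) := ecStep_pair hp (h1.trans hN)
  exact h2.trans (ecIter_subset_extC α S (N + 1))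

lemma extC_idem [Finite U] (α : Set (Set U × Set U)) (S : Set U) :
    extC α (extC α S) = extC α S :=
  subset_antisymm
    (extC_subset_of_closed (subset_refl _) fun _ hp h1 => extC_step_closed hp h1)
    (subset_extC _ _)

lemma extC_le_of_sim [Finite U] {α β : Set (Set U × Set U)}
    (h : ∀ p ∈ α, p.2 ⊆ extC β p.1) (S : Set U) : extC α S ⊆ extC β S :=
  extC_subset_of_closed (subset_extC _ _) fun p hp h1 =>
    (h p hp).trans ((extC_mono (subset_refl β) h1).trans (extC_idem β S).subset)

lemma extC_diff_of_not_subset [Finite U] {α : Set (Set U × Set U)}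
    {q : Set U × Set U} {S : Set U}
    (h : ¬ q.1 ⊆ extC (α \ {q}) S) : extC α S ⊆ extC (α \ {q}) S := by
  refine extC_subset_of_closed (subset_extC _ _) fun p hp h1 => ?_
  by_cases hpq : p = q
  · exact absurd (hpq ▸ h1) h
  · exact extC_step_closed (⟨hp, hpq⟩ : p ∈ α \ {q}) h1

lemma extC_subset_mu {μ : Set U → Set U} (hμ : IsClosure μ) {α : Set (Set U × Set U)}
    (hg : α ⊆ graphOf μ) (S : Set U) : extC α S ⊆ μ S :=
  extC_subset_of_closed (hμ.1 S) fun p hp h1 => by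
    rw [show p.2 = μ p.1 from hg hp]
    exact (hμ.2.1 _ _ h1).trans (hμ.2.2 S).subset

theorem exchange_cover [Finite U] (μ : Set U → Set U) (hμ : IsClosure μ)
    (α β : Set (Set U × Set U))
    (hα : NonredundantCover μ α) (hβ : NonredundantCover μ β)
    (X Y C : Set U) (hX : (X, C) ∈ α) (hY : (Y, C) ∈ β) (hne : X ≠ Y)
    (hdd : Y ⊆ extC {p ∈ graphOf μ | p.2 ⊂ C} X) :
    IsCover μ (insert (Y, C) (α \ {(X, C)})) ∧
    (insert (Y, C) (α \ {(X, C)})).ncard = α.ncard ∧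
    NonredundantCover μ (insert (Y, C) (α \ {(X, C)})) := by
  obtain ⟨⟨hαg, hαext⟩, hαnr⟩ := hα
  obtain ⟨⟨hβg, _⟩, _⟩ := hβ
  have hXC : C = μ X := hαg hX
  have hYC : C = μ Y := hβg hY
  have hμC : μ C = C := by rw [hXC, hμ.2.2]
  set δ : Set (Set U × Set U) := {p ∈ graphOf μ | p.2 ⊂ C} with hδdef
  set α' : Set (Set U × Set U) := α \ {(X, C)} with hα'def
  have hα'g : α' ⊆ graphOf μ := diff_subset.trans hαg
  have hα'ss : α' ⊂ α :=
    lt_of_le_of_ne diff_subset (fun h => ((h.symm ▸ hX : (X, C) ∈ α')).2 rfl)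
  have hδg : δ ⊆ graphOf μ := sep_subset _ _
  -- δ-pairs are derivable in any cover minus a pair whose left side has closure C
  have hδsim : ∀ (ρ : Set (Set U × Set U)) (Z : Set U), ρ ⊆ graphOf μ → extC ρ = μ →
      μ Z = C → ∀ S, extC δ S ⊆ extC (ρ \ {(Z, C)}) S := by
    intro ρ Z hρg hρe hZ S
    refine extC_le_of_sim (fun p hp => ?_) S
    obtain ⟨hpg, hpC⟩ := hp
    have hp2 : p.2 = μ p.1 := hpg
    have hnz : ¬ Z ⊆ extC (ρ \ {(Z, C)}) p.1 := by
      intro hZs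
      have h1 : extC (ρ \ {(Z, C)}) p.1 ⊆ μ p.1 :=
        extC_subset_mu hμ (diff_subset.trans hρg) p.1
      have h2 : C ⊆ μ p.1 := by
        rw [← hZ]
        exact (hμ.2.1 _ _ (hZs.trans h1)).trans (hμ.2.2 p.1).subset
      rw [← hp2] at h2
      exact hpC.2 h2
    calc p.2 = μ p.1 := hp2
      _ = extC ρ p.1 := by rw [hρe]
      _ ⊆ extC (ρ \ {(Z, C)}) p.1 := extC_diff_of_not_subset hnz
  have hYα' : Y ⊆ extC α' X := hdd.trans (hδsim α X hαg hαext hXC.symm X)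
  -- if C ⊆ extC α' X then α' is a proper cover: contradiction
  have hα'full : ¬ C ⊆ extC α' X := by
    intro hCX
    apply hαnr α' hα'ss
    funext S
    refine subset_antisymm (extC_subset_mu hμ hα'g S) ?_
    rw [← hαext]
    refine extC_le_of_sim (fun q hq => ?_) S
    by_cases hqX : q = (X, C)
    · rw [hqX]; exact hCX
    · exact extC_step_closed (⟨hq, hqX⟩ : q ∈ α') (subset_extC _ _)
  -- symmetry of direct determination
  have hsym : X ⊆ extC δ Y := by
    by_cases hCQ : C ⊆ extC δ Y
    · exact (hXC ▸ hμ.1 X).trans hCQ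
    · have hQC : extC δ Y ⊆ C := (extC_subset_mu hμ hδg Y).trans hYC.symm.subset
      have hnc : ¬ ∀ p ∈ α, p.1 ⊆ extC δ Y → p.2 ⊆ extC δ Y := by
        intro hcl
        apply hCQ
        have h1 : extC α (extC δ Y) ⊆ extC δ Y :=
          extC_subset_of_closed (subset_refl _) hcl
        rw [hαext] at h1
        refine subset_trans ?_ h1
        rw [hYC]
        exact hμ.2.1 _ _ (subset_extC _ _)
      push_neg at hnc
      obtain ⟨p, hpα, hp1, hp2⟩ := hnc
      have hp2μ : p.2 = μ p.1 := hαg hpα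
      have hp2C : p.2 ⊆ C := by
        rw [hp2μ]
        exact (hμ.2.1 _ _ (hp1.trans hQC)).trans hμC.subset
      by_cases hpc : p.2 = C
      · by_cases hpX : p.1 = X
        · exact hpX ▸ hp1
        · exfalso
          apply hα'full
          have hQX : extC δ Y ⊆ extC δ X := by
            refine subset_trans (extC_mono (subset_refl δ) hdd) ?_
            rw [extC_idem]
          have hW : p.1 ⊆ extC α' X :=
            (hp1.trans hQX).trans (hδsim α X hαg hαext hXC.symm X)
          have hpα' : p ∈ α' := ⟨hpα, fun h => hpX (congrArg Prod.fst h)⟩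
          have h3 := extC_step_closed hpα' hW
          rwa [hpc] at h3
      · have hpδ : p ∈ δ := ⟨hαg hpα, hp2C.ssubset_of_ne hpc⟩
        exact (hp2 (extC_step_closed hpδ hp1)).elim
  set γ : Set (Set U × Set U) := insert (Y, C) α' with hγdef
  have hγg : γ ⊆ graphOf μ := insert_subset (hβg hY) hα'g
  have hCγX : C ⊆ extC γ X := by
    have hYγ : Y ⊆ extC γ X := hYα'.trans (extC_mono (subset_insert _ _) (subset_refl X))
    exact extC_step_closed (p := ((Y, C) : Set U × Set U)) (mem_insert _ _) hYγ
  have hγext : extC γ = μ := by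
    funext S
    refine subset_antisymm (extC_subset_mu hμ hγg S) ?_
    rw [← hαext]
    refine extC_le_of_sim (fun q hq => ?_) S
    by_cases hqX : q = (X, C)
    · rw [hqX]; exact hCγX
    · exact extC_step_closed (mem_insert_of_mem _ (⟨hq, hqX⟩ : q ∈ α'))
        (subset_extC _ _)
  have hYnot : (Y, C) ∉ α' := fun hmem => hα'full (extC_step_closed hmem hYα')
  have hcard : γ.ncard = α.ncard := by
    rw [hγdef, Set.ncard_insert_of_notMem hYnot (Set.toFinite α')]
    show (α \ {(X, C)}).ncard + 1 = α.ncard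
    exact Set.ncard_diff_singleton_add_one hX (Set.toFinite α)
  refine ⟨⟨hγg, hγext⟩, hcard, ⟨hγg, hγext⟩, ?_⟩
  intro γ₁ hss hext1
  obtain ⟨p, hpγ, hpn⟩ := Set.exists_of_ssubset hss
  have hγ₁sub : γ₁ ⊆ γ \ {p} := fun x hx => ⟨hss.subset hx, fun hxp => hpn (hxp ▸ hx)⟩
  have hsand : extC (γ \ {p}) = μ := by
    funext S
    refine subset_antisymm (extC_subset_mu hμ (diff_subset.trans hγg) S) ?_
    rw [← hext1]
    exact extC_mono hγ₁sub (subset_refl S)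
  by_cases hpY : p = (Y, C)
  · apply hαnr α' hα'ss
    have heq : γ \ {p} = α' := by
      rw [hpY, hγdef]
      exact insert_diff_self_of_notMem hYnot
    rw [← heq]
    exact hsand
  · have hpα' : p ∈ α' := by
      rcases mem_insert_iff.1 hpγ with h | h
      · exact absurd h hpY
      · exact h
    have hpα : p ∈ α := hpα'.1
    have hpX2 : p ≠ (X, C) := fun h => hpα'.2 h
    have hHg : (γ \ {p}) ⊆ graphOf μ := diff_subset.trans hγg
    have hHd : (γ \ {p}) \ {(Y, C)} ⊆ α \ {p} := by
      rintro q ⟨⟨hq1, hq2⟩, hq3⟩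
      rcases mem_insert_iff.1 hq1 with h | h
      · exact absurd h hq3
      · exact ⟨h.1, hq2⟩
    have hCY : C ⊆ extC (α \ {p}) Y := by
      have h1 : extC δ Y ⊆ extC ((γ \ {p}) \ {(Y, C)}) Y :=
        hδsim (γ \ {p}) Y hHg hsand hYC.symm Y
      have h2 : X ⊆ extC (α \ {p}) Y :=
        (hsym.trans h1).trans (extC_mono hHd (subset_refl Y))
      exact extC_step_closed (p := ((X, C) : Set U × Set U))
        (⟨hX, fun h => hpX2 h.symm⟩ : (X, C) ∈ α \ {p}) h2
    apply hαnr (α \ {p})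
      (lt_of_le_of_ne diff_subset (fun h => ((h.symm ▸ hpα : p ∈ α \ {p})).2 rfl))
    funext S
    refine subset_antisymm (extC_subset_mu hμ (diff_subset.trans hαg) S) ?_
    rw [← hαext]
    refine extC_le_of_sim (fun q hq => ?_) S
    by_cases hqp : q = p
    · have hq2 : q.2 = μ q.1 := hαg hq
      rw [hq2, ← hsand]
      refine extC_le_of_sim (fun r hr => ?_) q.1
      by_cases hrY : r = (Y, C)
      · rw [hrY]; exact hCY
      · exact extC_step_closed (hHd (⟨hr, hrY⟩ : r ∈ (γ \ {p}) \ {(Y, C)}))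
          (subset_extC _ _)
    · exact extC_step_closed (⟨hq, hqp⟩ : q ∈ α \ {p}) (subset_extC _ _)
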